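/- arXiv:0903.1686 — 4 statements merged into one kernel-verified Lean document; each statement's English description precedes it below -/
import Mathlib

section
/- Let F = ℂ⟨u_{ij} : 1 ≤ i,j ≤ n⟩ be the free unital associative ℂ-algebra on n² generators. The linear map φ̃_3 : M_n(F) → F defined by (a_{ij}) ↦ Σ_{i,j} a_{ij}(u_{ij} − δ_{ij}) is injective. -/
noncomputable section

open MonoidAlgebra Finsupp

lemma equiv_iota_eq {n : ℕ} (x : Fin n × Fin n) :
    FreeAlgebra.equivMonoidAlgebraFreeMonoid (FreeAlgebra.ι ℂ x)
      = MonoidAlgebra.single (FreeMonoid.of x) (1 : ℂ) := by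
  simp [FreeAlgebra.equivMonoidAlgebraFreeMonoid, MonoidAlgebra.of_apply]

lemma main_aux (n : ℕ) (b : Fin n × Fin n → MonoidAlgebra ℂ (FreeMonoid (Fin n × Fin n)))
    (heq : ∑ p : Fin n × Fin n, b p * MonoidAlgebra.single (FreeMonoid.of p) (1 : ℂ)
        = ∑ p : Fin n × Fin n, b p * (if p.1 = p.2 then 1 else 0)) :
    ∀ p, b p = 0 := by
  set N := (Finset.univ.sup fun p : Fin n × Fin n => (b p).coeff.support.sup fun w => w.length) + 1
    with hN
  have hbig : ∀ p (w : FreeMonoid (Fin n × Fin n)), N ≤ w.length → (b p).coeff w = 0 := by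
    intro p w hw
    by_contra h
    have hmem : w ∈ (b p).coeff.support := Finsupp.mem_support_iff.mpr h
    have h1 : w.length ≤ (b p).coeff.support.sup fun w => w.length := Finset.le_sup hmem
    have h2 : ((b p).coeff.support.sup fun w => w.length)
        ≤ Finset.univ.sup fun p : Fin n × Fin n => (b p).coeff.support.sup fun w => w.length :=
      Finset.le_sup (f := fun p : Fin n × Fin n => (b p).coeff.support.sup fun w => w.length) (Finset.mem_univ p)
    omega
  have key : ∀ d (p : Fin n × Fin n) (w : FreeMonoid (Fin n × Fin n)),
      N ≤ w.length + d → (b p).coeff w = 0 := by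
    intro d
    induction d with
    | zero => intro p w hw; exact hbig p w (by omega)
    | succ d ih =>
      intro p w hw
      have hL : (∑ q : Fin n × Fin n, b q * MonoidAlgebra.single (FreeMonoid.of q) (1 : ℂ)).coeff
          (w * FreeMonoid.of p) = (b p).coeff w := by
        rw [MonoidAlgebra.coeff_sum, Finset.sum_apply']
        rw [Finset.sum_eq_single p]
        · rw [MonoidAlgebra.coeff_mul_single_eq_coeff_mul (m₂ := w), mul_one]
          intro a _
          constructor
          · exact fun h => mul_right_cancel h
          · rintro rfl; rfl
        · intro q _ hq
          apply MonoidAlgebra.mul_single_apply_of_not_exists_mul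
          rintro ⟨d', hd'⟩
          apply hq
          have htl := congrArg (fun l => (FreeMonoid.toList l).getLast?) hd'
          simp only [FreeMonoid.toList_mul, FreeMonoid.toList_of,
            List.getLast?_concat] at htl
          exact (Option.some_injective _ htl).symm
        · simp
      have hR : (∑ q : Fin n × Fin n,
          b q * ((if q.1 = q.2 then 1 else 0) : MonoidAlgebra ℂ (FreeMonoid (Fin n × Fin n)))).coeff
          (w * FreeMonoid.of p) = 0 := by
        rw [MonoidAlgebra.coeff_sum, Finset.sum_apply']
        apply Finset.sum_eq_zero
        intro q _
        split_ifs
        · rw [mul_one]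
          apply ih q
          have : (w * FreeMonoid.of p).length = w.length + 1 := by
            rw [FreeMonoid.length_mul, FreeMonoid.length_of]
          omega
        · simp
      rw [heq, hR] at hL
      exact hL.symm
  intro p
  ext w
  simpa using key N p w (by omega)

theorem phi3_tilde_injective (n : ℕ) :
    Function.Injective (fun a : Fin n × Fin n → FreeAlgebra ℂ (Fin n × Fin n) =>
      ∑ p : Fin n × Fin n,
        a p * (FreeAlgebra.ι ℂ p - if p.1 = p.2 then 1 else 0)) := by
  intro a b hab
  simp only at hab
  have h : ∑ p : Fin n × Fin n,
      (a p - b p) * (FreeAlgebra.ι ℂ p - if p.1 = p.2 then 1 else 0) = 0 := by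
    simp only [sub_mul, Finset.sum_sub_distrib, hab, sub_self]
  have h2 : ∑ p : Fin n × Fin n, (a p - b p) * FreeAlgebra.ι ℂ p
      = ∑ p : Fin n × Fin n,
        (a p - b p) * ((if p.1 = p.2 then 1 else 0) : FreeAlgebra ℂ (Fin n × Fin n)) := by
    rw [← sub_eq_zero, ← Finset.sum_sub_distrib]
    simpa only [mul_sub] using h
  set e := FreeAlgebra.equivMonoidAlgebraFreeMonoid
    (R := ℂ) (X := Fin n × Fin n) with he
  have heq : ∑ p : Fin n × Fin n,
      e (a p - b p) * MonoidAlgebra.single (FreeMonoid.of p) (1 : ℂ)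
      = ∑ p : Fin n × Fin n, e (a p - b p) * (if p.1 = p.2 then 1 else 0) := by
    have := congrArg e h2
    simp only [map_sum, map_mul, equiv_iota_eq, apply_ite e, map_one, map_zero, he] at this ⊢
    simp only [apply_ite (FreeAlgebra.equivMonoidAlgebraFreeMonoid (R := ℂ) (X := Fin n × Fin n)), map_one, map_zero] at this
    exact this
  have hz := main_aux n (fun p => e (a p - b p)) heq
  funext p
  have : e (a p - b p) = 0 := hz p
  have h0 : a p - b p = 0 := by
    apply e.injective
    simpa using this
  exact sub_eq_zero.mp h0
end
end

section
/- In the complex C_* of Theorem 1, the composition φ_2 ∘ φ_1 = 0, where φ_1 : A_o(n) → M_nA_o(n) sends 1 to Σ_{i,j}(u_{ij} − δ_{ij}) ⊗ e_{ij} and φ_2 sends e_{ij} to r_{ij} = 1⊗e_{ij} + Σ_k u_{ik}⊗e_{jk}. -/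
open scoped TensorProduct
noncomputable section

inductive AoRel (n : ℕ) : FreeAlgebra ℂ (Fin n × Fin n) → FreeAlgebra ℂ (Fin n × Fin n) → Prop
  | row (i k : Fin n) : AoRel n (∑ j, FreeAlgebra.ι ℂ (i, j) * FreeAlgebra.ι ℂ (k, j)) (if i = k then 1 else 0)
  | col (i k : Fin n) : AoRel n (∑ j, FreeAlgebra.ι ℂ (j, i) * FreeAlgebra.ι ℂ (j, k)) (if i = k then 1 else 0)

/-- The free orthogonal quantum group algebra `A_o(n)`. -/
abbrev Ao (n : ℕ) := RingQuot (AoRel n)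

/-- The canonical generators `u i j` of `A_o(n)`. -/
def u (n : ℕ) (i j : Fin n) : Ao n := RingQuot.mkAlgHom ℂ (AoRel n) (FreeAlgebra.ι ℂ (i, j))

/-- The element `r i k = 1 ⊗ e_{ik} + Σ_j u_{ij} ⊗ e_{kj}` of the free module. -/
def r (n : ℕ) (i k : Fin n) : Fin n × Fin n → Ao n :=
  fun p => (if p = (i, k) then 1 else 0) + (if p.1 = k then u n i p.2 else 0)

lemma col_rel (n : ℕ) (a b : Fin n) :
    ∑ i, u n i a * u n i b = if a = b then 1 else 0 := by
  have h := RingQuot.mkAlgHom_rel ℂ (AoRel.col a b)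
  simpa [u, map_sum, map_mul, apply_ite (RingQuot.mkAlgHom ℂ (AoRel n))] using h

theorem phi2_comp_phi1_eq_zero (n : ℕ) :
    ∑ p : Fin n × Fin n,
      (u n p.1 p.2 - if p.1 = p.2 then 1 else 0) • r n p.1 p.2 = 0 := by
  funext q
  obtain ⟨a, b⟩ := q
  simp only [Finset.sum_apply, Pi.smul_apply, Pi.zero_apply, r, smul_eq_mul, mul_add]
  rw [Finset.sum_add_distrib]
  have h1 : ∑ p : Fin n × Fin n,
      (u n p.1 p.2 - if p.1 = p.2 then 1 else 0) * (if (a, b) = (p.1, p.2) then 1 else 0)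
      = u n a b - if a = b then 1 else 0 := by
    rw [Finset.sum_eq_single (a, b)]
    · simp
    · intro p _ hp
      have : (a, b) ≠ (p.1, p.2) := by simpa [Prod.ext_iff, eq_comm] using hp
      simp [this]
    · simp
  have h2 : ∑ p : Fin n × Fin n,
      (u n p.1 p.2 - if p.1 = p.2 then 1 else 0) * (if a = p.2 then u n p.1 b else 0)
      = (if a = b then 1 else 0) - u n a b := by
    rw [Fintype.sum_prod_type_right]
    rw [Finset.sum_eq_single a]
    · simp only [eq_self_iff_true, if_true, sub_mul, Finset.sum_sub_distrib, col_rel,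
        ite_mul, one_mul, zero_mul, Finset.sum_ite_eq', Finset.mem_univ]
    · intro k _ hk
      simp [Ne.symm hk]
    · simp
  rw [h1, h2]
  abel
end
end

section
/- The homology of the complex 0 → ℂ →^{0} M_n(ℂ) →^{A ↦ A+Aᵗ} M_n(ℂ) →^{0} ℂ → 0 (placed in degrees 3,2,1,0) is: ℂ in degree 0, ℂ^{n(n−1)/2} in degree 1, ℂ^{n(n−1)/2} in degree 2, ℂ in degree 3, and 0 in degrees ≥ 4. Consequently H_*(A_o(n), ℂ) = Tor_*^{A_o(n)}(ℂ,ℂ) has these dimensions. -/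
noncomputable section

/-- The linear map `A ↦ A + Aᵀ` on `n × n` complex matrices; the middle map of the
complex obtained by tensoring the resolution with the trivial module. -/
def phi (n : ℕ) : Matrix (Fin n) (Fin n) ℂ →ₗ[ℂ] Matrix (Fin n) (Fin n) ℂ where
  toFun A := A + A.transpose
  map_add' A B := by simp [Matrix.transpose_add]; abel
  map_smul' c A := by simp [Matrix.transpose_smul]

section aux

variable (n : ℕ)

def skewOf (f : {p : Fin n × Fin n // p.1 < p.2} → ℂ) : Matrix (Fin n) (Fin n) ℂ :=
  fun i j => if h : i < j then f ⟨(i, j), h⟩ else if h' : j < i then -f ⟨(j, i), h'⟩ else 0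

lemma skewOf_mem_ker (f : {p : Fin n × Fin n // p.1 < p.2} → ℂ) :
    skewOf n f ∈ LinearMap.ker (phi n) := by
  simp only [LinearMap.mem_ker, phi, LinearMap.coe_mk, AddHom.coe_mk]
  change skewOf n f + (skewOf n f).transpose = 0
  ext i j
  simp only [Matrix.add_apply, Matrix.transpose_apply, skewOf, Matrix.zero_apply]
  rcases lt_trichotomy i j with h | h | h
  · rw [dif_pos h, dif_neg (not_lt.2 h.le), dif_pos h]; ring
  · subst h; simp
  · rw [dif_neg (not_lt.2 h.le), dif_pos h, dif_pos h]; ring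

def kerEquiv : LinearMap.ker (phi n) ≃ₗ[ℂ] ({p : Fin n × Fin n // p.1 < p.2} → ℂ) where
  toFun A := fun p => (A : Matrix (Fin n) (Fin n) ℂ) p.1.1 p.1.2
  map_add' A B := rfl
  map_smul' c A := rfl
  invFun f := ⟨skewOf n f, skewOf_mem_ker n f⟩
  left_inv := by
    rintro ⟨A, hA⟩
    have hA' : A + A.transpose = 0 := hA
    have key : ∀ i j, A j i = -A i j := by
      intro i j
      have := congrFun (congrFun hA' j) i
      simp only [Matrix.add_apply, Matrix.transpose_apply, Matrix.zero_apply] at this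
      linear_combination this
    ext i j
    simp only [skewOf]
    rcases lt_trichotomy i j with h | h | h
    · rw [dif_pos h]
    · subst h
      rw [dif_neg (lt_irrefl i), dif_neg (lt_irrefl i)]
      have h0 : A i i = 0 := by linear_combination (1/2 : ℂ) * (key i i)
      exact h0.symm
    · rw [dif_neg (not_lt.2 h.le), dif_pos h, key j i]
  right_inv := by
    intro f
    ext p
    obtain ⟨⟨i, j⟩, h⟩ := p
    simp [skewOf, h]

end aux

/-- Homology of `0 → ℂ →0→ M_n(ℂ) →φ→ M_n(ℂ) →0→ ℂ → 0` in degrees 0, 1, 2, 3: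
degree 0 is `ℂ ⧸ im 0 = ℂ`, degree 1 is `ker 0 ⧸ im φ`, degree 2 is `ker φ ⧸ im 0`,
degree 3 is `ker 0 ⊆ ℂ`. -/
theorem homology_dims (n : ℕ) :
    Module.finrank ℂ ℂ = 1 ∧
    Module.finrank ℂ (Matrix (Fin n) (Fin n) ℂ ⧸ LinearMap.range (phi n)) = n * (n - 1) / 2 ∧
    Module.finrank ℂ (LinearMap.ker (phi n)) = n * (n - 1) / 2 ∧
    Module.finrank ℂ ℂ = 1 := by
  have hcard : Fintype.card {p : Fin n × Fin n // p.1 < p.2} = n * (n - 1) / 2 := by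
    have e : {p : Fin n × Fin n // p.1 < p.2} ≃ Σ j : Fin n, Fin j.val :=
      { toFun := fun p => ⟨p.1.2, ⟨p.1.1.val, p.2⟩⟩
        invFun := fun x => ⟨(⟨x.2.val, x.2.isLt.trans x.1.isLt⟩, x.1), x.2.isLt⟩
        left_inv := fun p => by ext <;> rfl
        right_inv := fun x => by ext <;> rfl }
    rw [Fintype.card_congr e, Fintype.card_sigma]
    simp only [Fintype.card_fin]
    rw [Fin.sum_univ_eq_sum_range (fun j => j) n, Finset.sum_range_id]
  have hker : Module.finrank ℂ (LinearMap.ker (phi n)) = n * (n - 1) / 2 := by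
    rw [(kerEquiv n).finrank_eq, Module.finrank_pi, hcard]
  have hM : Module.finrank ℂ (Matrix (Fin n) (Fin n) ℂ) = n * n := by
    rw [Module.finrank_matrix]; simp
  have h1 := LinearMap.finrank_range_add_finrank_ker (phi n)
  have h2 := Submodule.finrank_quotient_add_finrank (LinearMap.range (phi n))
  refine ⟨Module.finrank_self ℂ, ?_, hker, Module.finrank_self ℂ⟩
  omega
end
end

section
/- For n = 2, the map φ_2 : M_2(ℂ) → M_2(ℂ), A ↦ A + Aᵗ, has one-dimensional kernel spanned by the matrix e_{12} − e_{21}, and the first homology of A_o(2) with trivial coefficients H_1(A_o(2), ℂ) is one-dimensional. -/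
noncomputable section

/-- The linear map `A ↦ A + Aᵀ` on `2 × 2` complex matrices. -/
def phi2x2 : Matrix (Fin 2) (Fin 2) ℂ →ₗ[ℂ] Matrix (Fin 2) (Fin 2) ℂ where
  toFun A := A + A.transpose
  map_add' A B := by simp [Matrix.transpose_add]; abel
  map_smul' c A := by simp [Matrix.transpose_smul]

lemma ker_phi2x2 :
    LinearMap.ker phi2x2 =
      Submodule.span ℂ
        {Matrix.single (0 : Fin 2) (1 : Fin 2) (1 : ℂ) -
          Matrix.single (1 : Fin 2) (0 : Fin 2) (1 : ℂ)} := by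
  ext A
  constructor
  · intro hA
    have h : A + A.transpose = 0 := hA
    have h00 : A 0 0 + A 0 0 = 0 := by
      have := congrFun (congrFun h 0) 0; simpa [Matrix.transpose_apply] using this
    have h11 : A 1 1 + A 1 1 = 0 := by
      have := congrFun (congrFun h 1) 1; simpa [Matrix.transpose_apply] using this
    have h01 : A 0 1 + A 1 0 = 0 := by
      have := congrFun (congrFun h 0) 1; simpa [Matrix.transpose_apply] using this
    have e00 : A 0 0 = 0 := by linear_combination (1/2 : ℂ) * h00
    have e11 : A 1 1 = 0 := by linear_combination (1/2 : ℂ) * h11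
    have e10 : A 1 0 = -A 0 1 := by linear_combination h01
    refine Submodule.mem_span_singleton.mpr ⟨A 0 1, ?_⟩
    ext i j
    fin_cases i <;> fin_cases j <;>
      simp [Matrix.single, e00, e11, e10]
  · intro hA
    obtain ⟨c, rfl⟩ := Submodule.mem_span_singleton.mp hA
    rw [LinearMap.mem_ker]
    show _ + Matrix.transpose _ = (0 : Matrix (Fin 2) (Fin 2) ℂ)
    ext i j
    fin_cases i <;> fin_cases j <;>
      simp [phi2x2, Matrix.single]

theorem ker_phi2x2_and_H1 :
    LinearMap.ker phi2x2 =
      Submodule.span ℂ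
        {Matrix.single (0 : Fin 2) (1 : Fin 2) (1 : ℂ) -
          Matrix.single (1 : Fin 2) (0 : Fin 2) (1 : ℂ)} ∧
    Module.finrank ℂ (Matrix (Fin 2) (Fin 2) ℂ ⧸ LinearMap.range phi2x2) = 1 := by
  refine ⟨ker_phi2x2, ?_⟩
  have hker : Module.finrank ℂ (LinearMap.ker phi2x2) = 1 := by
    rw [ker_phi2x2]
    rw [finrank_span_singleton]
    intro h
    have := congrFun (congrFun h 0) 1
    simp [Matrix.single] at this
  have htot : Module.finrank ℂ (Matrix (Fin 2) (Fin 2) ℂ) = 4 := by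
    simp [Module.finrank_matrix]
  have h1 := LinearMap.finrank_range_add_finrank_ker phi2x2
  have h2 := Submodule.finrank_quotient_add_finrank (LinearMap.range phi2x2)
  omega
end
end
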